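/- arXiv:1609.05810 — 2 statements merged into one kernel-verified Lean document; each statement's English description precedes it below -/
import Mathlib

section
/- Let 0 < λ ≤ Λ and let 1 ≤ p ≤ n be an integer. For every p-dimensional linear subspace W of ℝⁿ and every n×n real symmetric matrix X, P⁺_{λ,Λ|W}(X) ≤ Σ_{i=n−p+1}^n (Λ·e_i(X)⁺ − λ·e_i(X)⁻), where e_1(X) ≤ … ≤ e_n(X) are the eigenvalues of X in increasing order, t⁺ = max(t,0) and t⁻ = max(−t,0). -/
open MeasureTheory Metric Filter
open scoped ENNReal

noncomputable section

/-- Matrix (in the standard basis) of the orthogonal projection of `ℝⁿ` onto a subspace `W`. -/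
noncomputable def projMatrix {n : ℕ} (W : Submodule ℝ (EuclideanSpace ℝ (Fin n))) :
    Matrix (Fin n) (Fin n) ℝ :=
  LinearMap.toMatrix (EuclideanSpace.basisFun (Fin n) ℝ).toBasis
    (EuclideanSpace.basisFun (Fin n) ℝ).toBasis
    (W.subtype ∘ₗ (W.orthogonalProjectionOnto).toLinearMap)

/-- `X_W = P_W X P_W`, the compression of `X` to the subspace `W`. -/
noncomputable def restrictW {n : ℕ} (W : Submodule ℝ (EuclideanSpace ℝ (Fin n)))
    (X : Matrix (Fin n) (Fin n) ℝ) : Matrix (Fin n) (Fin n) ℝ :=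
  projMatrix W * X * projMatrix W

/-- `Tr(A⁺)`, i.e. the sum of the positive parts of the eigenvalues of a symmetric matrix `A`,
where `A = A⁺ - A⁻` is the unique decomposition with `A⁺, A⁻` positive semidefinite and
`A⁺ A⁻ = 0`. -/
noncomputable def posTrace {n : ℕ} (A : Matrix (Fin n) (Fin n) ℝ) : ℝ :=
  if h : A.IsHermitian then ∑ i, max (h.eigenvalues i) 0 else 0

/-- `Tr(A⁻)`, the sum of the negative parts of the eigenvalues of a symmetric matrix `A`. -/
noncomputable def negTrace {n : ℕ} (A : Matrix (Fin n) (Fin n) ℝ) : ℝ :=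
  if h : A.IsHermitian then ∑ i, max (-h.eigenvalues i) 0 else 0

/-- The restricted Pucci maximal operator `P⁺_{λ,Λ|W}(X) = Λ·Tr(X_W⁺) − λ·Tr(X_W⁻)`. -/
noncomputable def pucciSupW {n : ℕ} (lam Lam : ℝ) (W : Submodule ℝ (EuclideanSpace ℝ (Fin n)))
    (X : Matrix (Fin n) (Fin n) ℝ) : ℝ :=
  Lam * posTrace (restrictW W X) - lam * negTrace (restrictW W X)

/-- The restricted Pucci minimal operator `P⁻_{λ,Λ|W}(X) = λ·Tr(X_W⁺) − Λ·Tr(X_W⁻)`. -/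
noncomputable def pucciInfW {n : ℕ} (lam Lam : ℝ) (W : Submodule ℝ (EuclideanSpace ℝ (Fin n)))
    (X : Matrix (Fin n) (Fin n) ℝ) : ℝ :=
  lam * posTrace (restrictW W X) - Lam * negTrace (restrictW W X)

/-- The eigenvalues of a symmetric matrix arranged in increasing order, `0`-based:
`sortedEig X 0 = e_1(X) ≤ … ≤ sortedEig X (n-1) = e_n(X)`. -/
noncomputable def sortedEig {n : ℕ} (X : Matrix (Fin n) (Fin n) ℝ) : Fin n → ℝ :=
  if h : X.IsHermitian then h.eigenvalues ∘ (Tuple.sort h.eigenvalues) else 0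

/-- The degenerate Pucci maximal operator of order `p`:
`P⁺_{λ,Λ|p}(X) = Σ_{i=n−p+1}^n (Λ·e_i(X)⁺ − λ·e_i(X)⁻)` (sum over the `p` largest
eigenvalues). -/
noncomputable def pucciSupP {n : ℕ} (lam Lam : ℝ) (p : ℕ)
    (X : Matrix (Fin n) (Fin n) ℝ) : ℝ :=
  ∑ i ∈ Finset.univ.filter (fun i : Fin n => n - p ≤ (i : ℕ)),
    (Lam * max (sortedEig X i) 0 - lam * max (-(sortedEig X i)) 0)

/-- The degenerate Pucci minimal operator of order `p`:
`P⁻_{λ,Λ|p}(X) = Σ_{i=1}^p (λ·e_i(X)⁺ − Λ·e_i(X)⁻)` (sum over the `p` smallest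
eigenvalues). -/
noncomputable def pucciInfP {n : ℕ} (lam Lam : ℝ) (p : ℕ)
    (X : Matrix (Fin n) (Fin n) ℝ) : ℝ :=
  ∑ i ∈ Finset.univ.filter (fun i : Fin n => (i : ℕ) < p),
    (lam * max (sortedEig X i) 0 - Lam * max (-(sortedEig X i)) 0)

/-- The Hessian matrix `D²φ(x)` of a real valued function on `ℝⁿ`. -/
noncomputable def hessianMatrix {n : ℕ} (φ : EuclideanSpace ℝ (Fin n) → ℝ)
    (x : EuclideanSpace ℝ (Fin n)) : Matrix (Fin n) (Fin n) ℝ :=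
  fun i j => iteratedFDeriv ℝ 2 φ x ![EuclideanSpace.single i 1, EuclideanSpace.single j 1]

/-- `u` is a viscosity subsolution of `G(u, Du, D²u) = f(x)` in `Ω`. -/
def IsViscositySubsolution {n : ℕ} (Ω : Set (EuclideanSpace ℝ (Fin n)))
    (G : ℝ → EuclideanSpace ℝ (Fin n) → Matrix (Fin n) (Fin n) ℝ → ℝ)
    (u f : EuclideanSpace ℝ (Fin n) → ℝ) : Prop :=
  ∀ x₀ ∈ Ω, ∀ φ : EuclideanSpace ℝ (Fin n) → ℝ, ContDiff ℝ 2 φ →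
    IsLocalMaxOn (fun x => u x - φ x) Ω x₀ →
    f x₀ ≤ G (u x₀) (gradient φ x₀) (hessianMatrix φ x₀)

/-- `v` is a viscosity supersolution of `G(v, Dv, D²v) = f(x)` in `Ω`. -/
def IsViscositySupersolution {n : ℕ} (Ω : Set (EuclideanSpace ℝ (Fin n)))
    (G : ℝ → EuclideanSpace ℝ (Fin n) → Matrix (Fin n) (Fin n) ℝ → ℝ)
    (v f : EuclideanSpace ℝ (Fin n) → ℝ) : Prop :=
  ∀ x₀ ∈ Ω, ∀ φ : EuclideanSpace ℝ (Fin n) → ℝ, ContDiff ℝ 2 φ →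
    IsLocalMinOn (fun x => v x - φ x) Ω x₀ →
    G (v x₀) (gradient φ x₀) (hessianMatrix φ x₀) ≤ f x₀

-- The `α`-Riesz kernel (for sets contained in `B_d`), with value `∞` at the origin:
-- `Φ_α(x) = |x|^{−α}` for `α > 0` and `Φ_0(x) = log(2d/|x|)`.
open Classical in
noncomputable def rieszKernel {n : ℕ} (α d : ℝ) (x : EuclideanSpace ℝ (Fin n)) : ℝ≥0∞ :=
  if x = 0 then ⊤
  else ENNReal.ofReal (if α = 0 then Real.log (2 * d / ‖x‖) else ‖x‖ ^ (-α))

/-- The real valued `α`-Riesz kernel (for sets contained in `B_d`):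
`Φ_α(x) = |x|^{−α}` for `α > 0` and `Φ_0(x) = log(2d/|x|)`. -/
noncomputable def rieszKernelR {n : ℕ} (α d : ℝ) (x : EuclideanSpace ℝ (Fin n)) : ℝ :=
  if α = 0 then Real.log (2 * d / ‖x‖) else ‖x‖ ^ (-α)

/-- A set `E ⊆ ℝⁿ` has zero `α`-Riesz capacity: every Borel probability measure supported
on a compact subset of `E` has infinite `α`-energy. -/
def HasZeroRieszCapacity {n : ℕ} (α : ℝ) (E : Set (EuclideanSpace ℝ (Fin n))) : Prop :=
  ∀ K ⊆ E, IsCompact K → ∀ d > 0, K ⊆ ball (0 : EuclideanSpace ℝ (Fin n)) d →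
    ∀ μ : Measure (EuclideanSpace ℝ (Fin n)), IsProbabilityMeasure μ → μ Kᶜ = 0 →
      ∫⁻ x, ∫⁻ y, rieszKernel α d (x - y) ∂μ ∂μ = ⊤



section PucciAux
open Matrix Finset

variable {n : ℕ}

variable (W : Submodule ℝ (EuclideanSpace ℝ (Fin n)))

lemma projMatrix_mulVec (v : EuclideanSpace ℝ (Fin n)) :
    projMatrix W *ᵥ v = (W.orthogonalProjectionOnto v : EuclideanSpace ℝ (Fin n)) := by
  have h := LinearMap.toMatrix_mulVec_repr (EuclideanSpace.basisFun (Fin n) ℝ).toBasis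
    (EuclideanSpace.basisFun (Fin n) ℝ).toBasis
    (W.subtype ∘ₗ (W.orthogonalProjectionOnto).toLinearMap) v
  ext i
  have := congrFun h i
  have e : ⇑((EuclideanSpace.basisFun (Fin n) ℝ).toBasis.repr v) = v.ofLp :=
    funext fun k => EuclideanSpace.basisFun_repr (x := v) (i := k)
  rw [e] at this
  simpa [projMatrix] using this

lemma projMatrix_apply (i j : Fin n) :
    projMatrix W i j = (W.orthogonalProjectionOnto (EuclideanSpace.single j 1) : EuclideanSpace ℝ (Fin n)) i := by
  simp [projMatrix, LinearMap.toMatrix_apply]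

lemma projMatrix_isHermitian : (projMatrix W).IsHermitian := by
  rw [Matrix.IsHermitian]
  ext i j
  have hsym := W.starProjection_isSymmetric (𝕜 := ℝ)
  have h1 : projMatrix W i j = inner (𝕜 := ℝ) (EuclideanSpace.single i (1:ℝ))
      ((W.subtypeL ∘L W.orthogonalProjectionOnto) (EuclideanSpace.single j 1)) := by
    rw [projMatrix_apply]
    simp [EuclideanSpace.inner_single_left]
  have h2 : projMatrix W j i = inner (𝕜 := ℝ) (EuclideanSpace.single j (1:ℝ))
      ((W.subtypeL ∘L W.orthogonalProjectionOnto) (EuclideanSpace.single i 1)) := by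
    rw [projMatrix_apply]
    simp [EuclideanSpace.inner_single_left]
  rw [Matrix.conjTranspose_apply]
  rw [star_trivial, h1, h2]
  exact ((hsym (EuclideanSpace.single j 1) (EuclideanSpace.single i 1)).symm).trans
    (real_inner_comm _ _)

variable {M : Matrix (Fin n) (Fin n) ℝ}

local notation "E" => EuclideanSpace ℝ (Fin n)

/-- span of the eigenvectors indexed by `s` -/
noncomputable def espan (hM : M.IsHermitian) (s : Finset (Fin n)) : Submodule ℝ E :=
  Submodule.span ℝ (⇑(hM.eigenvectorBasis) '' ↑s)

lemma finrank_espan (hM : M.IsHermitian) (s : Finset (Fin n)) :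
    Module.finrank ℝ (espan hM s) = s.card := by
  have h : LinearIndependent ℝ (fun i : ↥s => hM.eigenvectorBasis i) :=
    (hM.eigenvectorBasis.orthonormal.comp _ Subtype.val_injective).linearIndependent
  have hr : Set.range (fun i : ↥s => hM.eigenvectorBasis i) = ⇑(hM.eigenvectorBasis) '' ↑s := by
    ext x; simp
  rw [espan, ← hr, finrank_span_eq_card h, Fintype.card_coe]

lemma inner_coord_zero_of_not_mem (hM : M.IsHermitian) (s : Finset (Fin n)) {v : E}
    (hv : v ∈ espan hM s) {i : Fin n} (hi : i ∉ s) :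
    inner (𝕜 := ℝ) (hM.eigenvectorBasis i) v = 0 := by
  induction hv using Submodule.span_induction with
  | mem x hx =>
    obtain ⟨j, hj, rfl⟩ := hx
    exact hM.eigenvectorBasis.orthonormal.2 (fun h : i = j => hi (h ▸ hj))
  | zero => simp
  | add x y _ _ hx hy => rw [inner_add_right, hx, hy, add_zero]
  | smul c x _ hx => rw [inner_smul_right, hx, mul_zero]

lemma norm_sq_espan (hM : M.IsHermitian) (s : Finset (Fin n)) {v : E}
    (hv : v ∈ espan hM s) :
    ‖v‖^2 = ∑ i ∈ s, (inner (𝕜 := ℝ) (hM.eigenvectorBasis i) v)^2 := by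
  have h1 : ‖v‖^2 = ∑ i, (inner (𝕜 := ℝ) (hM.eigenvectorBasis i) v)^2 := by
    rw [← real_inner_self_eq_norm_sq, ← hM.eigenvectorBasis.sum_inner_mul_inner v v]
    exact Finset.sum_congr rfl fun i _ => by rw [real_inner_comm v]; ring
  rw [h1, ← Finset.sum_subset (Finset.subset_univ s)]
  intro i _ hi
  rw [inner_coord_zero_of_not_mem hM s hv hi]; ring

/-- `M *ᵥ x` as an element of Euclidean space. -/
noncomputable def mulVecE (M : Matrix (Fin n) (Fin n) ℝ) (x : E) : E := WithLp.toLp 2 (M *ᵥ x)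

lemma herm_inner_mulVecE (hM : M.IsHermitian) (x y : E) :
    inner (𝕜 := ℝ) (mulVecE M x) y = inner (𝕜 := ℝ) x (mulVecE M y) := by
  simp only [mulVecE, PiLp.inner_apply, RCLike.inner_apply, starRingEnd_apply, star_trivial]
  show ∑ i, y i * (M *ᵥ x) i = ∑ i, (M *ᵥ y) i * x i
  simp only [Matrix.mulVec, dotProduct]
  simp only [Finset.sum_mul, Finset.mul_sum]
  rw [Finset.sum_comm]
  apply Finset.sum_congr rfl
  intro i _
  apply Finset.sum_congr rfl
  intro j _
  have := hM.apply i j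
  rw [star_trivial] at this
  rw [← this]; ring

lemma mulVecE_eigenvectorBasis (hM : M.IsHermitian) (i : Fin n) :
    mulVecE M (hM.eigenvectorBasis i) = hM.eigenvalues i • hM.eigenvectorBasis i := by
  apply (WithLp.equiv 2 _).injective
  ext j
  have := congrFun (hM.mulVec_eigenvectorBasis i) j
  simpa [mulVecE] using this

lemma quad_espan (hM : M.IsHermitian) (s : Finset (Fin n)) {v : E}
    (hv : v ∈ espan hM s) :
    inner (𝕜 := ℝ) v (mulVecE M v) =
      ∑ i ∈ s, hM.eigenvalues i * (inner (𝕜 := ℝ) (hM.eigenvectorBasis i) v)^2 := by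
  have h1 : inner (𝕜 := ℝ) v (mulVecE M v) =
      ∑ i, hM.eigenvalues i * (inner (𝕜 := ℝ) (hM.eigenvectorBasis i) v)^2 := by
    rw [← hM.eigenvectorBasis.sum_inner_mul_inner v (mulVecE M v)]
    apply Finset.sum_congr rfl
    intro i _
    have h2 : inner (𝕜 := ℝ) (hM.eigenvectorBasis i) (mulVecE M v)
        = inner (𝕜 := ℝ) (mulVecE M (hM.eigenvectorBasis i)) v :=
      (herm_inner_mulVecE hM _ v).symm
    rw [h2, mulVecE_eigenvectorBasis, inner_smul_left, real_inner_comm v]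
    simp only [starRingEnd_apply, star_trivial, RCLike.inner_apply]
    ring
  rw [h1, ← Finset.sum_subset (Finset.subset_univ s)]
  intro i _ hi
  rw [inner_coord_zero_of_not_mem hM s hv hi]; ring

lemma core_count (hM : M.IsHermitian) (t : ℝ) (S : Submodule ℝ E)
    (hS : ∀ v ∈ S, t * ‖v‖^2 ≤ inner (𝕜 := ℝ) v (mulVecE M v)) :
    Module.finrank ℝ S ≤ (Finset.univ.filter fun i => t ≤ hM.eigenvalues i).card := by
  classical
  set s := Finset.univ.filter (fun i => hM.eigenvalues i < t) with hs
  have hdisj : Disjoint S (espan hM s) := by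
    rw [Submodule.disjoint_def]
    intro v hvS hvV
    by_contra hv0
    have hn : 0 < ‖v‖^2 := by
      have : ‖v‖ ≠ 0 := norm_ne_zero_iff.mpr hv0
      positivity
    have hq := quad_espan hM s hvV
    have hns := norm_sq_espan hM s hvV
    have hex : ∃ i ∈ s, (inner (𝕜 := ℝ) (hM.eigenvectorBasis i) v)^2 ≠ 0 := by
      by_contra hc
      push_neg at hc
      have : ‖v‖^2 = 0 := by
        rw [hns]
        exact Finset.sum_eq_zero hc
      linarith
    obtain ⟨i₀, hi₀s, hi₀⟩ := hex
    have hlt : ∑ i ∈ s, hM.eigenvalues i * (inner (𝕜 := ℝ) (hM.eigenvectorBasis i) v)^2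
        < t * ‖v‖^2 := by
      rw [hns, Finset.mul_sum]
      apply Finset.sum_lt_sum
      · intro i hi
        have : hM.eigenvalues i < t := by
          simpa [hs] using hi
        exact mul_le_mul_of_nonneg_right this.le (sq_nonneg _)
      · refine ⟨i₀, hi₀s, ?_⟩
        have : hM.eigenvalues i₀ < t := by simpa [hs] using hi₀s
        have h2 : 0 < (inner (𝕜 := ℝ) (hM.eigenvectorBasis i₀) v)^2 :=
          lt_of_le_of_ne (sq_nonneg _) (Ne.symm hi₀)
        exact mul_lt_mul_of_pos_right this h2
    have := hS v hvS
    rw [hq] at this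
    linarith
  have h1 : Module.finrank ℝ S + s.card ≤ n := by
    have := Submodule.finrank_add_finrank_le_of_disjoint hdisj
    rw [finrank_espan] at this
    simpa [finrank_euclideanSpace] using this
  have h2 : (Finset.univ.filter fun i => t ≤ hM.eigenvalues i).card + s.card = n := by
    have := Finset.card_filter_add_card_filter_not
      (s := (Finset.univ : Finset (Fin n))) (p := fun i => t ≤ hM.eigenvalues i)
    simp only [not_le] at this
    simpa [hs] using this
  omega

lemma card_filter_perm (y : Fin n → ℝ) (p : ℝ → Prop) [DecidablePred p] :
    (univ.filter fun i => p ((y ∘ Tuple.sort y) i)).card = (univ.filter fun i => p (y i)).card :=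
  Finset.card_equiv (Tuple.sort y) (fun i => by simp)

lemma sorted_ge_of_count (y : Fin n → ℝ) (t : ℝ) (k : ℕ)
    (hk : k ≤ (univ.filter fun i => t ≤ y i).card) (i : Fin n) (hi : n - k ≤ i.val) :
    t ≤ (y ∘ Tuple.sort y) i := by
  classical
  set g := y ∘ Tuple.sort y with hg
  have hmono : Monotone g := Tuple.monotone_sort y
  by_contra hlt
  push_neg at hlt
  have hsub : (univ.filter fun j => t ≤ g j) ⊆ Finset.Ioi i := by
    intro j hj
    simp only [mem_filter] at hj
    rw [Finset.mem_Ioi]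
    by_contra hji
    push_neg at hji
    exact absurd hj.2 (not_le.mpr (lt_of_le_of_lt (hmono hji) hlt))
  have hcard : (univ.filter fun j => t ≤ g j).card ≤ n - 1 - i.val := by
    simpa [Fin.card_Ioi] using Finset.card_le_card hsub
  rw [card_filter_perm y (fun r => t ≤ r)] at hcard
  have hin : i.val < n := i.isLt
  omega

lemma sorted_neg_iff (y : Fin n → ℝ) (i : Fin n) :
    (y ∘ Tuple.sort y) i < 0 ↔
      i.val < (univ.filter fun j => y j < 0).card := by
  classical
  set g := y ∘ Tuple.sort y with hg
  have hmono : Monotone g := Tuple.monotone_sort y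
  have hc : (univ.filter fun j => g j < 0).card = (univ.filter fun j => y j < 0).card :=
    card_filter_perm y (fun r => r < 0)
  rw [← hc]
  constructor
  · intro h
    have hsub : Finset.Iic i ⊆ univ.filter fun j => g j < 0 := by
      intro j hj
      simp only [Finset.mem_Iic] at hj
      exact mem_filter.mpr ⟨mem_univ _, lt_of_le_of_lt (hmono hj) h⟩
    have := Finset.card_le_card hsub
    rw [Fin.card_Iic] at this
    omega
  · intro h
    by_contra hge
    push_neg at hge
    have hsub : (univ.filter fun j => g j < 0) ⊆ Finset.Iio i := by
      intro j hj
      simp only [mem_filter] at hj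
      rw [Finset.mem_Iio]
      by_contra hji
      push_neg at hji
      exact absurd (lt_of_le_of_lt (le_trans hge (hmono hji)) hj.2) (lt_irrefl 0)
    have := Finset.card_le_card hsub
    rw [Fin.card_Iio] at this
    omega

lemma sorted_pos_iff (y : Fin n → ℝ) (i : Fin n) :
    0 < (y ∘ Tuple.sort y) i ↔
      n - (univ.filter fun j => 0 < y j).card ≤ i.val := by
  classical
  set g := y ∘ Tuple.sort y with hg
  have hmono : Monotone g := Tuple.monotone_sort y
  have hc : (univ.filter fun j => 0 < g j).card = (univ.filter fun j => 0 < y j).card :=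
    card_filter_perm y (fun r => 0 < r)
  rw [← hc]
  have hin : i.val < n := i.isLt
  constructor
  · intro h
    have hsub : Finset.Ici i ⊆ univ.filter fun j => 0 < g j := by
      intro j hj
      simp only [Finset.mem_Ici] at hj
      exact mem_filter.mpr ⟨mem_univ _, lt_of_lt_of_le h (hmono hj)⟩
    have := Finset.card_le_card hsub
    rw [Fin.card_Ici] at this
    omega
  · intro h
    by_contra hge
    push_neg at hge
    have hsub : (univ.filter fun j => 0 < g j) ⊆ Finset.Ioi i := by
      intro j hj
      simp only [mem_filter] at hj
      rw [Finset.mem_Ioi]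
      by_contra hji
      push_neg at hji
      exact absurd (lt_of_lt_of_le hj.2 (le_trans (hmono hji) hge)) (lt_irrefl 0)
    have := Finset.card_le_card hsub
    rw [Fin.card_Ioi] at this
    omega

lemma quad_lower (hM : M.IsHermitian) (t : ℝ) {v : E}
    (hv : v ∈ espan hM (univ.filter fun i => t ≤ hM.eigenvalues i)) :
    t * ‖v‖^2 ≤ inner (𝕜 := ℝ) v (mulVecE M v) := by
  rw [quad_espan hM _ hv, norm_sq_espan hM _ hv, Finset.mul_sum]
  apply Finset.sum_le_sum
  intro i hi
  have hti : t ≤ hM.eigenvalues i := by simpa using hi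
  exact mul_le_mul_of_nonneg_right hti (sq_nonneg _)

lemma finrank_inf_aux (S T : Submodule ℝ E) :
    Module.finrank ℝ S + Module.finrank ℝ T ≤ Module.finrank ℝ ↥(S ⊓ T) + n := by
  have h := Submodule.finrank_sup_add_finrank_inf_eq S T
  have h2 : Module.finrank ℝ ↥(S ⊔ T) ≤ n := by
    have := Submodule.finrank_le (S ⊔ T)
    simpa [finrank_euclideanSpace] using this
  omega

variable {X : Matrix (Fin n) (Fin n) ℝ}

lemma restrictW_isHermitian (W : Submodule ℝ (EuclideanSpace ℝ (Fin n)))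
    (hX : X.IsHermitian) : (restrictW W X).IsHermitian := by
  have hP := projMatrix_isHermitian W
  have hPt : (projMatrix W)ᵀ = projMatrix W := by
    ext i j
    simpa using hP.apply i j
  have hXt : Xᵀ = X := by
    ext i j
    simpa using hX.apply i j
  show _ = _
  rw [restrictW]
  simp [Matrix.conjTranspose_mul, hPt, hXt, Matrix.mul_assoc]

lemma mulVecE_restrictW_mem (W : Submodule ℝ (EuclideanSpace ℝ (Fin n))) (v : E) :
    mulVecE (restrictW W X) v ∈ W := by
  have h : mulVecE (restrictW W X) v
      = (W.orthogonalProjectionOnto (WithLp.toLp 2 ((X * projMatrix W) *ᵥ v)) : E) := by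
    have hp := projMatrix_mulVec W (WithLp.toLp 2 ((X * projMatrix W) *ᵥ v))
    rw [WithLp.ofLp_toLp] at hp
    rw [mulVecE, restrictW, Matrix.mul_assoc, ← Matrix.mulVec_mulVec, hp]
  rw [h]
  exact SetLike.coe_mem _

lemma mulVecE_proj_self (W : Submodule ℝ (EuclideanSpace ℝ (Fin n))) {v : E} (hv : v ∈ W) :
    mulVecE (projMatrix W) v = v := by
  rw [mulVecE, projMatrix_mulVec]
  exact W.starProjection_eq_self_iff.mpr hv

lemma inner_restrictW_eq (W : Submodule ℝ (EuclideanSpace ℝ (Fin n))) {v : E} (hv : v ∈ W) :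
    inner (𝕜 := ℝ) v (mulVecE (restrictW W X) v) = inner (𝕜 := ℝ) v (mulVecE X v) := by
  have h1 : mulVecE (restrictW W X) v
      = mulVecE (projMatrix W) (mulVecE X (mulVecE (projMatrix W) v)) := by
    simp only [mulVecE, restrictW, Matrix.mulVec_mulVec, Matrix.mul_assoc]
  rw [h1, mulVecE_proj_self W hv, ← herm_inner_mulVecE (projMatrix_isHermitian W) v,
    mulVecE_proj_self W hv]

lemma eigvec_restrictW_mem (W : Submodule ℝ (EuclideanSpace ℝ (Fin n)))
    (hA : (restrictW W X).IsHermitian) {i : Fin n} (hi : hA.eigenvalues i ≠ 0) :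
    (hA.eigenvectorBasis i : E) ∈ W := by
  have h := mulVecE_eigenvectorBasis hA i
  have h2 : (hA.eigenvectorBasis i : E)
      = (hA.eigenvalues i)⁻¹ • mulVecE (restrictW W X) (hA.eigenvectorBasis i) := by
    rw [h, smul_smul, inv_mul_cancel₀ hi, one_smul]
  rw [h2]
  exact W.smul_mem _ (mulVecE_restrictW_mem W _)

lemma espan_le_W (W : Submodule ℝ (EuclideanSpace ℝ (Fin n)))
    (hA : (restrictW W X).IsHermitian) (s : Finset (Fin n))
    (hs : ∀ i ∈ s, hA.eigenvalues i ≠ 0) : espan hA s ≤ W := by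
  rw [espan, Submodule.span_le]
  rintro x ⟨i, hi, rfl⟩
  exact eigvec_restrictW_mem W hA (hs i (by simpa using hi))

end PucciAux

/-- the restricted Pucci maximal operator on a `p`-dimensional subspace is
bounded by the weighted sum of the `p` largest eigenvalues. -/
theorem pucci_restricted_le_pucci_order (n : ℕ) (lam Lam : ℝ)
    (hlam : 0 < lam) (hLam : lam ≤ Lam) (p : ℕ) (hp1 : 1 ≤ p) (hpn : p ≤ n)
    (W : Submodule ℝ (EuclideanSpace ℝ (Fin n))) (hW : Module.finrank ℝ W = p)
    (X : Matrix (Fin n) (Fin n) ℝ) (hX : X.IsHermitian) :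
    pucciSupW lam Lam W X ≤ pucciSupP lam Lam p X := by
  classical
  have hA : (restrictW W X).IsHermitian := restrictW_isHermitian W hX
  set μ : Fin n → ℝ := hA.eigenvalues with hμdef
  set e : Fin n → ℝ := hX.eigenvalues with hedef
  set f : ℝ → ℝ := fun t => Lam * max t 0 - lam * max (-t) 0 with hf
  have hLam0 : 0 < Lam := lt_of_lt_of_le hlam hLam
  have hfmono : ∀ s t : ℝ, s ≤ t → f s ≤ f t := by
    intro s t hst
    have h1 : max s 0 ≤ max t 0 := max_le_max hst le_rfl
    have h2 : max (-t) 0 ≤ max (-s) 0 := max_le_max (neg_le_neg hst) le_rfl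
    have h3 := mul_le_mul_of_nonneg_left h1 hLam0.le
    have h4 := mul_le_mul_of_nonneg_left h2 hlam.le
    simp only [hf]
    linarith
  have hf0 : f 0 = 0 := by simp [hf]
  have hfnn : ∀ t : ℝ, 0 ≤ t → 0 ≤ f t := fun t ht => hf0 ▸ hfmono 0 t ht
  -- rewrite the LHS
  have hLHS : pucciSupW lam Lam W X = ∑ i, f (μ i) := by
    rw [pucciSupW, posTrace, negTrace, dif_pos hA, dif_pos hA, Finset.mul_sum,
      Finset.mul_sum, ← Finset.sum_sub_distrib]
  -- rewrite the RHS
  have hsorted : sortedEig X = e ∘ (Tuple.sort e) := by rw [sortedEig, dif_pos hX]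
  set eS : Fin n → ℝ := e ∘ (Tuple.sort e) with heS
  have hRHS : pucciSupP lam Lam p X
      = ∑ i ∈ Finset.univ.filter (fun i : Fin n => n - p ≤ (i : ℕ)), f (eS i) := by
    rw [pucciSupP]
    exact Finset.sum_congr rfl fun i _ => by rw [hsorted]
  set g : Fin n → ℝ := μ ∘ (Tuple.sort μ) with hgdef
  have hgmono : Monotone g := Tuple.monotone_sort μ
  have hLHS2 : ∑ i, f (μ i) = ∑ i, f (g i) := (Equiv.sum_comp (Tuple.sort μ) (fun i => f (μ i))).symm
  set km := (Finset.univ.filter fun i => μ i < 0).card with hkm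
  set kp := (Finset.univ.filter fun i => 0 < μ i).card with hkp
  -- k₊ + k₋ ≤ p
  have hkmp : kp + km ≤ p := by
    have hspan := espan_le_W W hA (Finset.univ.filter fun i => μ i ≠ 0)
      (fun i hi => by simpa using hi)
    have hle : (Finset.univ.filter fun i => μ i ≠ 0).card ≤ p := by
      have h1 := Submodule.finrank_mono hspan
      rw [finrank_espan, hW] at h1
      exact h1
    have hsplit : (Finset.univ.filter fun i => μ i ≠ 0)
        = (Finset.univ.filter fun i => 0 < μ i) ∪ (Finset.univ.filter fun i => μ i < 0) := by
      ext i
      simp only [Finset.mem_filter, Finset.mem_union, Finset.mem_univ, true_and]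
      constructor
      · intro h; rcases lt_or_gt_of_ne h with h' | h'
        · exact Or.inr h'
        · exact Or.inl h'
      · rintro (h | h) <;> [exact ne_of_gt h; exact ne_of_lt h]
    have hdisj : Disjoint (Finset.univ.filter fun i => 0 < μ i)
        (Finset.univ.filter fun i => μ i < 0) := by
      rw [Finset.disjoint_left]
      intro i hi1 hi2
      simp only [Finset.mem_filter] at hi1 hi2
      linarith [hi1.2, hi2.2]
    rw [hsplit, Finset.card_union_of_disjoint hdisj] at hle
    omega
  -- counting for sorted μ
  have hcount : ∀ j : Fin n, n - (j : ℕ) ≤ (Finset.univ.filter fun i => g j ≤ μ i).card := by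
    intro j
    have h1 : (Finset.univ.filter fun i => μ i < g j).card
        = (Finset.univ.filter fun i => g i < g j).card :=
      (card_filter_perm μ (fun r => r < g j)).symm
    have h2 : (Finset.univ.filter fun i => g i < g j) ⊆ Finset.Iio j := by
      intro i hi
      simp only [Finset.mem_filter] at hi
      rw [Finset.mem_Iio]
      by_contra h
      push_neg at h
      exact absurd (hgmono h) (not_le.mpr hi.2)
    have h3 := Finset.card_le_card h2
    rw [Fin.card_Iio] at h3
    have h4 := Finset.card_filter_add_card_filter_not
      (s := (Finset.univ : Finset (Fin n))) (p := fun i => g j ≤ μ i)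
    simp only [not_le, Finset.card_univ, Fintype.card_fin] at h4
    omega
  have hcount0 : n - km ≤ (Finset.univ.filter fun i => (0:ℝ) ≤ μ i).card := by
    have h4 := Finset.card_filter_add_card_filter_not
      (s := (Finset.univ : Finset (Fin n))) (p := fun i => (0:ℝ) ≤ μ i)
    simp only [not_le, Finset.card_univ, Fintype.card_fin] at h4
    omega
  -- main transfer machinery
  have main_ineq : ∀ (t : ℝ) (c : ℕ), c ≤ (Finset.univ.filter fun j => t ≤ e j).card →
      ∀ i : Fin n, n - c ≤ (i : ℕ) → t ≤ eS i := by
    intro t c hc i hi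
    exact sorted_ge_of_count e t c hc i hi
  have caseW : ∀ (t : ℝ) (d : ℕ), d + n ≤ p + (Finset.univ.filter fun j => t ≤ μ j).card →
      d ≤ (Finset.univ.filter fun j => t ≤ e j).card := by
    intro t d hd
    have hdim : d ≤ Module.finrank ℝ ↥(W ⊓ espan hA (Finset.univ.filter fun j => t ≤ μ j)) := by
      have h1 := finrank_inf_aux W (espan hA (Finset.univ.filter fun j => t ≤ μ j))
      rw [finrank_espan, hW] at h1
      omega
    have hS : ∀ v ∈ W ⊓ espan hA (Finset.univ.filter fun j => t ≤ μ j),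
        t * ‖v‖^2 ≤ inner (𝕜 := ℝ) v (mulVecE X v) := by
      intro v hv
      obtain ⟨hvW, hvV⟩ := Submodule.mem_inf.mp hv
      calc t * ‖v‖^2 ≤ inner (𝕜 := ℝ) v (mulVecE (restrictW W X) v) := quad_lower hA t hvV
        _ = inner (𝕜 := ℝ) v (mulVecE X v) := inner_restrictW_eq W hvW
    exact le_trans hdim (core_count hX t _ hS)
  have casePos : ∀ (t : ℝ), 0 < t → ∀ d : ℕ, d ≤ (Finset.univ.filter fun j => t ≤ μ j).card →
      d ≤ (Finset.univ.filter fun j => t ≤ e j).card := by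
    intro t ht d hd
    have hVW : espan hA (Finset.univ.filter fun j => t ≤ μ j) ≤ W := by
      apply espan_le_W
      intro i hi
      simp only [Finset.mem_filter] at hi
      exact ne_of_gt (lt_of_lt_of_le ht hi.2)
    have hS : ∀ v ∈ espan hA (Finset.univ.filter fun j => t ≤ μ j),
        t * ‖v‖^2 ≤ inner (𝕜 := ℝ) v (mulVecE X v) := by
      intro v hv
      calc t * ‖v‖^2 ≤ inner (𝕜 := ℝ) v (mulVecE (restrictW W X) v) := quad_lower hA t hv
        _ = inner (𝕜 := ℝ) v (mulVecE X v) := inner_restrictW_eq W (hVW hv)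
    have h1 : d ≤ Module.finrank ℝ ↥(espan hA (Finset.univ.filter fun j => t ≤ μ j)) := by
      rw [finrank_espan]; exact hd
    exact le_trans h1 (core_count hX t _ hS)
  -- the three index-wise inequalities
  have I1 : ∀ j i : Fin n, (j : ℕ) < km → (i : ℕ) = n - p + (j : ℕ) → g j ≤ eS i := by
    intro j i hj hi
    have hjp : (j : ℕ) < p := by omega
    apply main_ineq (g j) (p - (j : ℕ))
    · apply caseW
      have := hcount j
      omega
    · omega
  have I2 : ∀ i : Fin n, n - kp ≤ (i : ℕ) → g i ≤ eS i := by
    intro i hi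
    have ht : 0 < g i := (sorted_pos_iff μ i).mpr hi
    apply main_ineq (g i) (n - (i : ℕ))
    · exact casePos (g i) ht _ (hcount i)
    · omega
  have I3 : ∀ i : Fin n, n - p + km ≤ (i : ℕ) → 0 ≤ eS i := by
    intro i hi
    have hkmle : km ≤ p := by omega
    apply main_ineq 0 (p - km)
    · apply caseW
      have := hcount0
      omega
    · omega
  -- zero structure of g
  have hgzero : ∀ i : Fin n, km ≤ (i : ℕ) → (i : ℕ) < n - kp → g i = 0 := by
    intro i h1 h2
    have hn : ¬ g i < 0 := by
      rw [sorted_neg_iff μ i]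
      omega
    have hp : ¬ 0 < g i := by
      rw [sorted_pos_iff μ i]
      omega
    linarith [not_lt.mp hn, not_lt.mp hp]
  -- final assembly
  set B := Finset.univ.filter (fun i : Fin n => (i : ℕ) < km) with hB
  set T := Finset.univ.filter (fun i : Fin n => n - kp ≤ (i : ℕ)) with hT
  set B' := Finset.univ.filter (fun i : Fin n => n - p ≤ (i : ℕ) ∧ (i : ℕ) < n - p + km) with hB'
  set Mid := Finset.univ.filter (fun i : Fin n => n - p + km ≤ (i : ℕ) ∧ (i : ℕ) < n - kp) with hMid
  have hdisjBT : Disjoint B T := by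
    rw [Finset.disjoint_left]
    intro i hi1 hi2
    simp only [hB, hT, Finset.mem_filter, Finset.mem_univ, true_and] at hi1 hi2
    omega
  have hsplitL : ∑ i, f (g i) = ∑ i ∈ B, f (g i) + ∑ i ∈ T, f (g i) := by
    rw [← Finset.sum_union hdisjBT]
    apply (Finset.sum_subset (Finset.subset_univ (B ∪ T)) ?_).symm
    intro i _ hi
    simp only [Finset.mem_union, hB, hT, Finset.mem_filter, Finset.mem_univ, true_and,
      not_or, not_lt, not_le] at hi
    rw [hgzero i hi.1 hi.2, hf0]
  have hsplitR : ∑ i ∈ Finset.univ.filter (fun i : Fin n => n - p ≤ (i : ℕ)), f (eS i)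
      = ∑ i ∈ B', f (eS i) + ∑ i ∈ Mid, f (eS i) + ∑ i ∈ T, f (eS i) := by
    have hd1 : Disjoint B' Mid := by
      rw [Finset.disjoint_left]
      intro i hi1 hi2
      simp only [hB', hMid, Finset.mem_filter, Finset.mem_univ, true_and] at hi1 hi2
      omega
    have hd2 : Disjoint (B' ∪ Mid) T := by
      rw [Finset.disjoint_left]
      intro i hi1 hi2
      simp only [Finset.mem_union, hB', hMid, hT, Finset.mem_filter, Finset.mem_univ,
        true_and] at hi1 hi2
      omega
    have hset : Finset.univ.filter (fun i : Fin n => n - p ≤ (i : ℕ)) = B' ∪ Mid ∪ T := by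
      ext i
      simp only [Finset.mem_union, hB', hMid, hT, Finset.mem_filter, Finset.mem_univ, true_and]
      have := i.isLt
      omega
    rw [hset, Finset.sum_union hd2, Finset.sum_union hd1]
  -- bottom block
  have hbot : ∑ i ∈ B, f (g i) ≤ ∑ i ∈ B', f (eS i) := by
    have hkmle : km ≤ p := by omega
    have hmap : ∀ i : Fin n, (i : ℕ) < km → (i : ℕ) + (n - p) < n := by
      intro i hi
      omega
    calc ∑ i ∈ B, f (g i)
        ≤ ∑ i ∈ B, f (eS (if h : (i : ℕ) + (n - p) < n then (⟨(i : ℕ) + (n - p), h⟩ : Fin n) else i)) := by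
          apply Finset.sum_le_sum
          intro i hi
          simp only [hB, Finset.mem_filter, Finset.mem_univ, true_and] at hi
          rw [dif_pos (hmap i hi)]
          apply hfmono
          apply I1 i _ hi
          show (i : ℕ) + (n - p) = n - p + (i : ℕ)
          omega
      _ = ∑ i ∈ B', f (eS i) := by
          refine Finset.sum_nbij'
            (fun i : Fin n => if h : (i : ℕ) + (n - p) < n then (⟨(i : ℕ) + (n - p), h⟩ : Fin n) else i)
            (fun i : Fin n => if h : (i : ℕ) - (n - p) < n then (⟨(i : ℕ) - (n - p), h⟩ : Fin n) else i)
            ?_ ?_ ?_ ?_ ?_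
          · intro a ha
            beta_reduce
            simp only [hB, Finset.mem_filter, Finset.mem_univ, true_and] at ha
            rw [dif_pos (hmap a ha)]
            simp only [hB', Finset.mem_filter, Finset.mem_univ, true_and, Fin.val_mk]
            omega
          · intro a ha
            beta_reduce
            simp only [hB', Finset.mem_filter, Finset.mem_univ, true_and] at ha
            have h2 : (a : ℕ) - (n - p) < n := by omega
            rw [dif_pos h2]
            simp only [hB, Finset.mem_filter, Finset.mem_univ, true_and, Fin.val_mk]
            omega
          · intro a ha
            beta_reduce
            simp only [hB, Finset.mem_filter, Finset.mem_univ, true_and] at ha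
            rw [dif_pos (hmap a ha)]
            have h2 : ((⟨(a : ℕ) + (n - p), hmap a ha⟩ : Fin n) : ℕ) - (n - p) < n := by
              simp only [Fin.val_mk]
              omega
            rw [dif_pos h2]
            apply Fin.ext
            simp only [Fin.val_mk]
            omega
          · intro a ha
            beta_reduce
            simp only [hB', Finset.mem_filter, Finset.mem_univ, true_and] at ha
            have h2 : (a : ℕ) - (n - p) < n := by omega
            rw [dif_pos h2]
            have h3 : (((⟨(a : ℕ) - (n - p), h2⟩ : Fin n)) : ℕ) + (n - p) < n := by
              simp only [Fin.val_mk]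
              omega
            rw [dif_pos h3]
            apply Fin.ext
            simp only [Fin.val_mk]
            omega
          · intro a ha
            beta_reduce
            rfl
  -- middle block
  have hmid : 0 ≤ ∑ i ∈ Mid, f (eS i) := by
    apply Finset.sum_nonneg
    intro i hi
    simp only [hMid, Finset.mem_filter, Finset.mem_univ, true_and] at hi
    exact hfnn _ (I3 i hi.1)
  -- top block
  have htop : ∑ i ∈ T, f (g i) ≤ ∑ i ∈ T, f (eS i) := by
    apply Finset.sum_le_sum
    intro i hi
    simp only [hT, Finset.mem_filter, Finset.mem_univ, true_and] at hi
    exact hfmono _ _ (I2 i hi)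
  rw [hLHS, hRHS, hLHS2, hsplitL, hsplitR]
  linarith

end
end

section
/- (Failure of the Maximum Principle when bδ > λp.) Let n ≥ 2, 0 < λ ≤ Λ, and let 1 ≤ p ≤ n−1 be an integer. Fix 0 < ε < π/6 and set δ = π/2 + ε/2 and b = λp/(δ − ε). Define u on the ball B_δ = {|x| < δ} ⊆ ℝⁿ by u(x) = cos(ε/2) if |x| ≤ π/2 − ε/2 and u(x) = sin|x| if π/2 − ε/2 ≤ |x| ≤ δ. Then u is continuous, is a viscosity subsolution of P⁺_{λ,Λ|p}(D²u) + b|Du| = 0 in B_δ, and max over the closed ball of u equals 1, which is strictly greater than cos(ε/2), the maximum of u on the boundary sphere {|x| = δ}; moreover bδ > λp. -/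
open MeasureTheory Metric Filter
open scoped ENNReal

noncomputable section

open Topology in
private theorem MP.sl3 {g g' : ℝ → ℝ} {L : ℝ} (hg : ∀ t, HasDerivAt g (g' t) t)
    (hg' : HasDerivAt g' L 0) (hmin : IsLocalMin g 0) : 0 ≤ L := by
  have hg'0 : g' 0 = 0 := hmin.hasDerivAt_eq_zero (hg 0)
  by_contra hL
  push_neg at hL
  have hfreq : ∃ᶠ c in 𝓝[>] (0:ℝ), 0 ≤ g' c := by
    rw [Filter.frequently_iff]
    intro U hU
    rcases mem_nhdsGT_iff_exists_Ioo_subset.1 hU with ⟨η, hη, hsub⟩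
    rcases Filter.eventually_iff_exists_mem.1 hmin with ⟨V, hV, hVmin⟩
    rcases Metric.mem_nhds_iff.1 hV with ⟨ρ, hρ, hball⟩
    have hη0 : (0:ℝ) < η := by simpa using hη
    set t := min η ρ / 2 with ht
    have htm : t < min η ρ := by have := lt_min hη0 hρ; nlinarith
    have ht0 : 0 < t := by positivity
    rcases exists_hasDerivAt_eq_slope g g' ht0
      (fun x _ => (hg x).continuousAt.continuousWithinAt) (fun x _ => hg x) with ⟨c, hc, hceq⟩
    refine ⟨c, hsub ⟨hc.1, hc.2.trans (htm.trans_le (min_le_left _ _))⟩, ?_⟩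
    rw [hceq]
    have : g 0 ≤ g t := by
      refine hVmin _ (hball ?_)
      simp only [Metric.mem_ball, Real.dist_eq, sub_zero, abs_of_pos ht0]
      exact htm.trans_le (min_le_right _ _)
    rw [sub_zero]
    exact div_nonneg (by linarith) ht0.le
  have htend : Filter.Tendsto (slope g' 0) (𝓝[>] (0:ℝ)) (𝓝 L) :=
    (hasDerivAt_iff_tendsto_slope.1 hg').mono_left
      (nhdsWithin_mono 0 (fun x (hx : x ∈ Set.Ioi (0:ℝ)) => (ne_of_gt hx : x ≠ 0)))
  have hev : ∀ᶠ c in 𝓝[>] (0:ℝ), slope g' 0 c < 0 :=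
    htend.eventually_lt_const hL
  rcases (hfreq.and_eventually (hev.and eventually_mem_nhdsWithin)).exists with
    ⟨c, hc1, hc2, hc3⟩
  have hcpos : (0:ℝ) < c := hc3
  rw [slope_def_field, hg'0, sub_zero, sub_zero, div_eq_inv_mul] at hc2
  have : 0 ≤ c⁻¹ * g' c := mul_nonneg (inv_nonneg.2 hcpos.le) hc1
  linarith

private theorem MP.sl2a {E : Type*} [NormedAddCommGroup E] [NormedSpace ℝ E]
    {φ : E → ℝ} (hφ : ContDiff ℝ 2 φ) (x₀ v : E) (t : ℝ) :
    HasDerivAt (fun t => φ (x₀ + t • v)) (fderiv ℝ φ (x₀ + t • v) v) t := by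
  have hline : HasDerivAt (fun s : ℝ => x₀ + s • v) v t := by
    simpa using ((hasDerivAt_id t).smul_const v).const_add x₀
  have hf : HasFDerivAt φ (fderiv ℝ φ (x₀ + t • v)) (x₀ + t • v) :=
    (hφ.differentiable (by norm_num) (x₀ + t • v)).hasFDerivAt
  exact hf.comp_hasDerivAt t hline

private theorem MP.sl2b {E : Type*} [NormedAddCommGroup E] [NormedSpace ℝ E]
    {φ : E → ℝ} (hφ : ContDiff ℝ 2 φ) (x₀ v : E) :
    HasDerivAt (fun t : ℝ => fderiv ℝ φ (x₀ + t • v) v)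
      (fderiv ℝ (fderiv ℝ φ) x₀ v v) 0 := by
  have hline : HasDerivAt (fun s : ℝ => x₀ + s • v) v 0 := by
    simpa using ((hasDerivAt_id (0:ℝ)).smul_const v).const_add x₀
  have hF : ContDiff ℝ 1 (fderiv ℝ φ) := hφ.fderiv_right (by norm_num)
  have hF' : HasFDerivAt (fderiv ℝ φ) (fderiv ℝ (fderiv ℝ φ) x₀) x₀ :=
    (hF.differentiable (by norm_num) x₀).hasFDerivAt
  have h1 : HasDerivAt (fun t : ℝ => fderiv ℝ φ (x₀ + t • v))
      (fderiv ℝ (fderiv ℝ φ) x₀ v) 0 := by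
    have h0 : x₀ = x₀ + (0:ℝ) • v := by simp
    rw [h0] at hF'
    have := hF'.comp_hasDerivAt 0 hline
    simpa [Function.comp_def] using this
  have := ((ContinuousLinearMap.apply ℝ ℝ v).hasFDerivAt).comp_hasDerivAt 0 h1
  simpa [Function.comp_def] using this

private theorem MP.vsum {n : ℕ} (v : EuclideanSpace ℝ (Fin n)) :
    v = ∑ j, v j • EuclideanSpace.single j (1:ℝ) := by
  ext k
  have : (∑ j, v j • EuclideanSpace.single j (1:ℝ)) k
      = EuclideanSpace.proj k (∑ j, v j • EuclideanSpace.single j (1:ℝ)) := rfl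
  rw [this, map_sum]
  simp [EuclideanSpace.single_apply]

open Matrix in
private theorem MP.sl1 {n : ℕ} {φ : EuclideanSpace ℝ (Fin n) → ℝ}
    (x₀ v : EuclideanSpace ℝ (Fin n)) :
    fderiv ℝ (fderiv ℝ φ) x₀ v v
      = (fun k => v k) ⬝ᵥ ((hessianMatrix φ x₀) *ᵥ (fun k => v k)) := by
  have hX : ∀ i j, hessianMatrix φ x₀ i j
      = fderiv ℝ (fderiv ℝ φ) x₀ (EuclideanSpace.single i 1) (EuclideanSpace.single j 1) := by
    intro i j
    rw [hessianMatrix, iteratedFDeriv_two_apply]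
    simp
  set B := fderiv ℝ (fderiv ℝ φ) x₀ with hB
  have expand : ∀ (T : EuclideanSpace ℝ (Fin n) →L[ℝ] ℝ),
      T v = ∑ j, v j * T (EuclideanSpace.single j 1) := by
    intro T
    conv_lhs => rw [MP.vsum v]
    rw [map_sum]
    simp [smul_eq_mul]
  have h2 : ∀ j, B v (EuclideanSpace.single j 1)
      = ∑ i, v i * B (EuclideanSpace.single i 1) (EuclideanSpace.single j 1) := by
    intro j
    exact expand ((ContinuousLinearMap.apply ℝ ℝ (EuclideanSpace.single j 1)).comp B)
  have h1 : B v v = ∑ j, v j * B v (EuclideanSpace.single j 1) := expand (B v)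
  rw [h1]
  simp_rw [h2, ← hX, Finset.mul_sum]
  rw [Finset.sum_comm]
  rw [dotProduct]
  refine Finset.sum_congr rfl fun i _ => ?_
  have : (hessianMatrix φ x₀ *ᵥ fun k => v k) i = ∑ j, hessianMatrix φ x₀ i j * v j := rfl
  rw [this, Finset.mul_sum]
  exact Finset.sum_congr rfl fun j _ => by ring

open Matrix in
private theorem MP.dot_eq_inner {n : ℕ} (w w' : EuclideanSpace ℝ (Fin n)) :
    (fun k => w k) ⬝ᵥ (fun k => w' k) = (inner ℝ w w' : ℝ) := by
  simp [dotProduct, PiLp.inner_apply, RCLike.inner_apply, mul_comm]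

open Matrix in
private theorem MP.eig_bound {n : ℕ} {X : Matrix (Fin n) (Fin n) ℝ} (hX : X.IsHermitian)
    (x₀ : EuclideanSpace ℝ (Fin n)) (m : ℝ)
    (hq : ∀ v : EuclideanSpace ℝ (Fin n), (inner ℝ x₀ v : ℝ) = 0 →
      m * (inner ℝ v v : ℝ) ≤ (fun k => v k) ⬝ᵥ (X *ᵥ fun k => v k)) :
    ∀ i j : Fin n, i ≠ j → m ≤ hX.eigenvalues i ∨ m ≤ hX.eigenvalues j := by
  intro i j hij
  by_contra hcon
  push_neg at hcon
  obtain ⟨hi, hj⟩ := hcon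
  set w := hX.eigenvectorBasis with hw
  set ci : ℝ := inner ℝ x₀ (w i) with hci
  set cj : ℝ := inner ℝ x₀ (w j) with hcj
  obtain ⟨c, d, hcd, hortho⟩ : ∃ c d : ℝ, ¬(c = 0 ∧ d = 0) ∧ c * ci + d * cj = 0 := by
    by_cases h0 : ci = 0 ∧ cj = 0
    · exact ⟨1, 0, by simp, by simp [h0.1, h0.2]⟩
    · exact ⟨cj, -ci, by rintro ⟨h1, h2⟩; exact h0 ⟨by simpa using h2, h1⟩, by ring⟩
  set v : EuclideanSpace ℝ (Fin n) := c • w i + d • w j with hv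
  have horth : ∀ a b : Fin n,
      ((fun k => (w a) k) ⬝ᵥ fun k => (w b) k) = if a = b then (1:ℝ) else 0 := by
    intro a b
    rw [MP.dot_eq_inner]
    have := hX.eigenvectorBasis.orthonormal
    rw [orthonormal_iff_ite] at this
    simpa using this a b
  have hvf : (fun k => v k) = c • (fun k => (w i) k) + d • (fun k => (w j) k) := by
    funext k
    simp [hv, PiLp.add_apply, PiLp.smul_apply]
  have hmv : X *ᵥ (fun k => v k)
      = (c * hX.eigenvalues i) • (fun k => (w i) k)
        + (d * hX.eigenvalues j) • (fun k => (w j) k) := by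
    rw [hvf, Matrix.mulVec_add, Matrix.mulVec_smul, Matrix.mulVec_smul]
    rw [show (fun k => (w i) k) = ⇑(hX.eigenvectorBasis i) from rfl,
        show (fun k => (w j) k) = ⇑(hX.eigenvectorBasis j) from rfl,
        hX.mulVec_eigenvectorBasis, hX.mulVec_eigenvectorBasis]
    funext k
    simp [mul_smul]
  have hqf : ((fun k => v k) ⬝ᵥ (X *ᵥ fun k => v k))
      = c^2 * hX.eigenvalues i + d^2 * hX.eigenvalues j := by
    rw [hmv, hvf]
    simp [add_dotProduct, dotProduct_add, smul_dotProduct,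
      dotProduct_smul, horth, hij, (Ne.symm hij : j ≠ i)]
    ring
  have hnorm : (inner ℝ v v : ℝ) = c^2 + d^2 := by
    rw [← MP.dot_eq_inner, hvf]
    simp [add_dotProduct, dotProduct_add, smul_dotProduct,
      dotProduct_smul, horth, hij, (Ne.symm hij : j ≠ i)]
    ring
  have hvo : (inner ℝ x₀ v : ℝ) = 0 := by
    rw [hv]
    rw [inner_add_right, real_inner_smul_right, real_inner_smul_right, ← hci, ← hcj]
    exact hortho
  have hkey := hq v hvo
  rw [hqf, hnorm] at hkey
  have e1 : 0 < m - hX.eigenvalues i := by linarith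
  have e2 : 0 < m - hX.eigenvalues j := by linarith
  have hsum : c^2*(m - hX.eigenvalues i) + d^2*(m - hX.eigenvalues j) ≤ 0 := by nlinarith [hkey]
  rcases not_and_or.1 hcd with hcc | hdd
  · have p1 : 0 < c^2*(m - hX.eigenvalues i) := mul_pos (by positivity) e1
    have p2 : 0 ≤ d^2*(m - hX.eigenvalues j) := mul_nonneg (sq_nonneg d) e2.le
    linarith
  · have p1 : 0 < d^2*(m - hX.eigenvalues j) := mul_pos (by positivity) e2
    have p2 : 0 ≤ c^2*(m - hX.eigenvalues i) := mul_nonneg (sq_nonneg c) e1.le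
    linarith

private theorem MP.sorted_ge {n : ℕ} {X : Matrix (Fin n) (Fin n) ℝ} (hX : X.IsHermitian) (m : ℝ)
    (h : ∀ i j : Fin n, i ≠ j → m ≤ hX.eigenvalues i ∨ m ≤ hX.eigenvalues j)
    (k : Fin n) (hk : 1 ≤ (k : ℕ)) : m ≤ sortedEig X k := by
  rw [sortedEig, dif_pos hX]
  by_contra hcon
  push_neg at hcon
  have hn0 : 0 < n := k.pos
  set k0 : Fin n := ⟨0, hn0⟩ with hk0
  have hle : k0 ≤ k := by
    simp [hk0, Fin.le_def]
  have hmono := Tuple.monotone_sort hX.eigenvalues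
  have h0 : hX.eigenvalues (Tuple.sort hX.eigenvalues k0) < m :=
    lt_of_le_of_lt (hmono hle) hcon
  have hne : Tuple.sort hX.eigenvalues k0 ≠ Tuple.sort hX.eigenvalues k := by
    intro hc
    have h2 := (Tuple.sort hX.eigenvalues).injective hc
    have h3 : (0:ℕ) = (k:ℕ) := congrArg Fin.val h2
    omega
  rcases h _ _ hne with h1 | h1
  · exact absurd h1 (not_le.2 h0)
  · exact absurd h1 (not_le.2 hcon)

open Matrix in
private theorem MP.eig_self {n : ℕ} {X : Matrix (Fin n) (Fin n) ℝ} (hX : X.IsHermitian)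
    (i : Fin n) :
    ((fun k => hX.eigenvectorBasis i k) ⬝ᵥ (X *ᵥ fun k => hX.eigenvectorBasis i k))
      = hX.eigenvalues i := by
  rw [show (fun k => hX.eigenvectorBasis i k) = ⇑(hX.eigenvectorBasis i) from rfl,
    hX.mulVec_eigenvectorBasis]
  have h := hX.eigenvectorBasis.orthonormal
  rw [orthonormal_iff_ite] at h
  have hone : ((fun k => hX.eigenvectorBasis i k) ⬝ᵥ fun k => hX.eigenvectorBasis i k) = 1 := by
    rw [MP.dot_eq_inner]
    simpa using h i i
  have : (⇑(hX.eigenvectorBasis i) ⬝ᵥ (hX.eigenvalues i • ⇑(hX.eigenvectorBasis i)))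
      = hX.eigenvalues i * ((fun k => hX.eigenvectorBasis i k) ⬝ᵥ fun k => hX.eigenvectorBasis i k) := by
    rw [dotProduct_smul]
    rfl
  rw [this, hone, mul_one]

private theorem MP.tangent_norm {E : Type*} [NormedAddCommGroup E] [InnerProductSpace ℝ E]
    (x₀ v : E) (hvo : (inner ℝ x₀ v : ℝ) = 0) (t : ℝ) :
    ‖x₀ + t • v‖ = Real.sqrt (‖x₀‖^2 + t^2 * ‖v‖^2) := by
  rw [← Real.sqrt_sq (norm_nonneg (x₀ + t • v))]
  congr 1
  rw [norm_add_sq_real, real_inner_smul_right, hvo, norm_smul]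
  simp [mul_pow]

private theorem MP.G_hasDeriv (r s : ℝ) (hr : 0 < r) :
    (∀ t : ℝ, HasDerivAt (fun t : ℝ => Real.sin (Real.sqrt (r^2 + t^2*s^2)))
      (Real.cos (Real.sqrt (r^2 + t^2*s^2)) * (t*s^2 / Real.sqrt (r^2 + t^2*s^2))) t) ∧
    HasDerivAt (fun t : ℝ => Real.cos (Real.sqrt (r^2 + t^2*s^2))
        * (t*s^2 / Real.sqrt (r^2 + t^2*s^2)))
      (Real.cos r * s^2 / r) 0 := by
  have hqpos : ∀ t : ℝ, 0 < r^2 + t^2*s^2 := by intro t; positivity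
  have hsqpos : ∀ t : ℝ, 0 < Real.sqrt (r^2 + t^2*s^2) :=
    fun t => Real.sqrt_pos.2 (hqpos t)
  have hq : ∀ t : ℝ, HasDerivAt (fun t : ℝ => r^2 + t^2*s^2) (2*t*s^2) t := by
    intro t
    have := ((hasDerivAt_pow 2 t).mul_const (s^2)).const_add (r^2)
    simpa [pow_one] using this
  have hsq : ∀ t : ℝ, HasDerivAt (fun t : ℝ => Real.sqrt (r^2 + t^2*s^2))
      (t*s^2 / Real.sqrt (r^2 + t^2*s^2)) t := by
    intro t
    have h := (Real.hasDerivAt_sqrt (ne_of_gt (hqpos t))).comp t (hq t)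
    refine h.congr_deriv ?_
    ring
  have hG : ∀ t : ℝ, HasDerivAt (fun t : ℝ => Real.sin (Real.sqrt (r^2 + t^2*s^2)))
      (Real.cos (Real.sqrt (r^2 + t^2*s^2)) * (t*s^2 / Real.sqrt (r^2 + t^2*s^2))) t := by
    intro t
    exact (Real.hasDerivAt_sin _).comp t (hsq t)
  refine ⟨hG, ?_⟩
  set k : ℝ → ℝ := fun t => Real.cos (Real.sqrt (r^2 + t^2*s^2))
    * (s^2 / Real.sqrt (r^2 + t^2*s^2)) with hk
  have hkdiff : DifferentiableAt ℝ k 0 := by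
    have h1 : DifferentiableAt ℝ (fun t : ℝ => r^2 + t^2*s^2) 0 := by fun_prop
    have h2 : DifferentiableAt ℝ (fun t : ℝ => Real.sqrt (r^2 + t^2*s^2)) 0 :=
      (hsq 0).differentiableAt
    exact ((Real.differentiable_cos.differentiableAt).comp 0 h2).mul
      ((differentiable_const _ |>.differentiableAt).div h2 (ne_of_gt (hsqpos 0)))
  have hprod : HasDerivAt (fun t : ℝ => t * k t) (1 * k 0 + 0 * deriv k 0) 0 :=
    (hasDerivAt_id 0).mul hkdiff.hasDerivAt
  have heq : (fun t : ℝ => Real.cos (Real.sqrt (r^2 + t^2*s^2))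
      * (t*s^2 / Real.sqrt (r^2 + t^2*s^2)))
      = fun t : ℝ => t * k t := by
    funext t
    rw [hk]
    ring
  rw [heq]
  convert hprod using 1
  simp [hk]
  rw [Real.sqrt_sq hr.le]
  ring

open Topology in
private theorem MP.radial_norm {E : Type*} [NormedAddCommGroup E] [InnerProductSpace ℝ E]
    (x₀ : E) (r : ℝ) (hr : 0 < r) (hx : ‖x₀‖ = r) :
    ‖(r⁻¹ • x₀ : E)‖ = 1 ∧ ∀ᶠ t in 𝓝 (0:ℝ), ‖x₀ + t • (r⁻¹ • x₀)‖ = r + t := by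
  constructor
  · rw [norm_smul, hx, Real.norm_eq_abs, abs_of_pos (inv_pos.2 hr)]
    field_simp
  · have hev : ∀ᶠ t in 𝓝 (0:ℝ), |t| < r := by
      have := Metric.ball_mem_nhds (0:ℝ) hr
      filter_upwards [this] with t ht
      simpa [Real.dist_eq] using ht
    filter_upwards [hev] with t ht
    have : x₀ + t • (r⁻¹ • x₀) = (1 + t/r) • x₀ := by
      rw [add_smul, one_smul, smul_smul]
      congr 1
    rw [this, norm_smul, hx, Real.norm_eq_abs]
    have h1 : 0 < 1 + t/r := by
      have h2 : -r < t := neg_lt_of_abs_lt ht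
      have h3 : -1 < t/r := by rw [lt_div_iff₀ hr]; linarith
      linarith
    rw [abs_of_pos h1]
    field_simp

set_option maxHeartbeats 2000000 in
open Topology Matrix in
/-- failure of the Maximum Principle when `bδ > λp`. -/
theorem maximum_principle_counterexample (n : ℕ) (hn : 2 ≤ n) (lam Lam : ℝ)
    (hlam : 0 < lam) (hLam : lam ≤ Lam) (p : ℕ) (hp1 : 1 ≤ p) (hpn : p ≤ n - 1)
    (ε : ℝ) (hε0 : 0 < ε) (hε : ε < Real.pi / 6)
    (δ b : ℝ) (hδ : δ = Real.pi / 2 + ε / 2) (hb : b = lam * p / (δ - ε))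
    (u : EuclideanSpace ℝ (Fin n) → ℝ)
    (hudef : ∀ x : EuclideanSpace ℝ (Fin n),
      u x = if ‖x‖ ≤ Real.pi / 2 - ε / 2 then Real.cos (ε / 2) else Real.sin ‖x‖) :
    Continuous u ∧
    IsViscositySubsolution (ball (0 : EuclideanSpace ℝ (Fin n)) δ)
      (fun _ ξ X => pucciSupP lam Lam p X + b * ‖ξ‖) u (fun _ => 0) ∧
    (∀ x ∈ closedBall (0 : EuclideanSpace ℝ (Fin n)) δ, u x ≤ 1) ∧
    (∃ x ∈ closedBall (0 : EuclideanSpace ℝ (Fin n)) δ, u x = 1) ∧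
    (∀ x ∈ sphere (0 : EuclideanSpace ℝ (Fin n)) δ, u x = Real.cos (ε / 2)) ∧
    Real.cos (ε / 2) < 1 ∧
    lam * p < b * δ := by
  have hπ := Real.pi_pos
  set c : ℝ := Real.pi / 2 - ε / 2 with hc
  have hc_pos : 0 < c := by rw [hc]; linarith
  have hcδ : c < δ := by rw [hδ, hc]; linarith
  have hδπ : δ < Real.pi := by rw [hδ]; linarith
  have hcπ2 : c ≤ Real.pi / 2 := by rw [hc]; linarith
  have hδε : δ - ε = c := by rw [hδ, hc]; ring
  have hsinc : Real.sin c = Real.cos (ε / 2) := by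
    rw [hc]; exact Real.sin_pi_div_two_sub (ε / 2)
  have hsinδ : Real.sin δ = Real.cos (ε / 2) := by
    rw [hδ, show Real.pi / 2 + ε / 2 = Real.pi - (Real.pi / 2 - ε / 2) by ring,
      Real.sin_pi_sub, ← hc, hsinc]
  have hppos : (0:ℝ) < (p:ℝ) := by exact_mod_cast Nat.pos_of_ne_zero (by omega)
  have hb0 : 0 < b := by
    rw [hb, hδε]
    exact div_pos (mul_pos hlam hppos) hc_pos
  have hudef' : u = fun x => if ‖x‖ ≤ c then Real.cos (ε / 2) else Real.sin ‖x‖ := by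
    funext x; rw [hudef x]
  -- global fact : sin ‖x‖ ≤ u x
  have hu_sin : ∀ x : EuclideanSpace ℝ (Fin n), Real.sin ‖x‖ ≤ u x := by
    intro x
    rw [hudef x]
    by_cases hx : ‖x‖ ≤ c
    · rw [if_pos hx, ← hsinc]
      exact Real.sin_le_sin_of_le_of_le_pi_div_two (by have := norm_nonneg x; linarith) hcπ2 hx
    · rw [if_neg hx]
  refine ⟨?_, ?_, ?_, ?_, ?_, ?_, ?_⟩
  · -- continuity
    rw [hudef']
    exact Continuous.if_le continuous_const (Real.continuous_sin.comp continuous_norm)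
      continuous_norm continuous_const
      (fun x hx => by rw [hx, hsinc])
  · -- viscosity subsolution
    intro x₀ hx₀ φ hφ hmax
    show (0:ℝ) ≤ pucciSupP lam Lam p (hessianMatrix φ x₀) + b * ‖gradient φ x₀‖
    set X := hessianMatrix φ x₀ with hXdef
    have hbnorm : 0 ≤ b * ‖gradient φ x₀‖ := mul_nonneg hb0.le (norm_nonneg _)
    by_cases hX : X.IsHermitian
    swap
    · have : pucciSupP lam Lam p X = 0 := by
        rw [pucciSupP]
        refine Finset.sum_eq_zero fun i _ => ?_
        rw [sortedEig, dif_neg hX]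
        simp
      rw [this]; linarith
    -- x₀ is interior
    have hmax' : ∀ᶠ x in 𝓝 x₀, u x - φ x ≤ u x₀ - φ x₀ := by
      have h0 : ∀ᶠ x in 𝓝[ball (0 : EuclideanSpace ℝ (Fin n)) δ] x₀,
          u x - φ x ≤ u x₀ - φ x₀ := hmax
      rwa [nhdsWithin_eq_nhds.2 (isOpen_ball.mem_nhds hx₀)] at h0
    have hgrad_eq : ∀ y : EuclideanSpace ℝ (Fin n),
        (inner ℝ (gradient φ x₀) y : ℝ) = fderiv ℝ φ x₀ y := by
      intro y
      rw [gradient]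
      exact InnerProductSpace.toDual_symm_apply
    by_cases hr : ‖x₀‖ < c
    · -- Case A : u locally constant
      have hu_near : ∀ᶠ x in 𝓝 x₀, u x = Real.cos (ε / 2) := by
        filter_upwards [Metric.ball_mem_nhds x₀ (sub_pos.2 hr)] with x hx
        have h1 : ‖x‖ ≤ c := by
          have h2 : ‖x - x₀‖ < c - ‖x₀‖ := by rwa [Metric.mem_ball, dist_eq_norm] at hx
          calc ‖x‖ = ‖(x - x₀) + x₀‖ := by rw [sub_add_cancel]
            _ ≤ ‖x - x₀‖ + ‖x₀‖ := norm_add_le _ _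
            _ ≤ c := by linarith
        rw [hudef x, if_pos h1]
      have hux₀ : u x₀ = Real.cos (ε / 2) := by rw [hudef x₀, if_pos hr.le]
      have hφmin : IsLocalMin φ x₀ := by
        show ∀ᶠ x in 𝓝 x₀, φ x₀ ≤ φ x
        filter_upwards [hmax', hu_near] with x h1 h2
        rw [h2, hux₀] at h1
        linarith
      have hqf : ∀ v : EuclideanSpace ℝ (Fin n),
          (0:ℝ) ≤ (fun k => v k) ⬝ᵥ (X *ᵥ fun k => v k) := by
        intro v
        have hcont : Continuous (fun t : ℝ => x₀ + t • v) := by fun_prop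
        have htend : Filter.Tendsto (fun t : ℝ => x₀ + t • v) (𝓝 0) (𝓝 x₀) := by
          have := hcont.tendsto 0
          simpa using this
        have hminv : IsLocalMin (fun t : ℝ => φ (x₀ + t • v)) 0 := by
          show ∀ᶠ t in 𝓝 (0:ℝ), φ (x₀ + (0:ℝ) • v) ≤ φ (x₀ + t • v)
          have h1 : ∀ᶠ x in 𝓝 x₀, φ x₀ ≤ φ x := hφmin
          filter_upwards [htend.eventually h1] with t ht
          simpa using ht
        have := MP.sl3 (fun t => MP.sl2a hφ x₀ v t) (MP.sl2b hφ x₀ v) hminv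
        rwa [MP.sl1 x₀ v] at this
      have heig : ∀ i : Fin n, 0 ≤ hX.eigenvalues i := by
        intro i
        rw [← MP.eig_self hX i]
        exact hqf _
      have hsortnn : ∀ k : Fin n, 0 ≤ sortedEig X k := by
        intro k
        rw [sortedEig, dif_pos hX]
        exact heig _
      have hpucci : 0 ≤ pucciSupP lam Lam p X := by
        rw [pucciSupP]
        refine Finset.sum_nonneg fun k _ => ?_
        have hs := hsortnn k
        have h1 : max (-(sortedEig X k)) 0 = 0 := max_eq_right (by linarith)
        rw [h1, mul_zero, sub_zero]
        exact mul_nonneg (hlam.trans_le hLam).le (le_max_right _ _)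
      linarith
    · -- Case B : touching sin ‖x‖
      push_neg at hr
      set r : ℝ := ‖x₀‖ with hrdef
      have hrδ : r < δ := by rwa [← mem_ball_zero_iff]
      have r0 : 0 < r := hc_pos.trans_le hr
      have hux₀ : u x₀ = Real.sin r := by
        rw [hudef x₀]
        by_cases h : ‖x₀‖ ≤ c
        · have : r = c := le_antisymm h hr
          rw [if_pos h, this, hsinc]
        · rw [if_neg h]
      have hlocmin : IsLocalMin (fun x => φ x - Real.sin ‖x‖) x₀ := by
        show ∀ᶠ x in 𝓝 x₀, φ x₀ - Real.sin ‖x₀‖ ≤ φ x - Real.sin ‖x‖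
        filter_upwards [hmax'] with x h1
        have h3 := hu_sin x
        rw [← hrdef, ← hux₀]
        linarith
      -- gradient lower bound via radial direction
      obtain ⟨hu1, hevr⟩ := MP.radial_norm x₀ r r0 rfl
      set u₀ : EuclideanSpace ℝ (Fin n) := r⁻¹ • x₀ with hu₀
      have hcontr : Continuous (fun t : ℝ => x₀ + t • u₀) := by fun_prop
      have htendr : Filter.Tendsto (fun t : ℝ => x₀ + t • u₀) (𝓝 0) (𝓝 x₀) := by
        have := hcontr.tendsto 0
        simpa using this
      have hminr : IsLocalMin (fun t : ℝ => φ (x₀ + t • u₀) - Real.sin (r + t)) 0 := by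
        show ∀ᶠ t in 𝓝 (0:ℝ), _ ≤ _
        have h1 : ∀ᶠ x in 𝓝 x₀, φ x₀ - Real.sin ‖x₀‖ ≤ φ x - Real.sin ‖x‖ := hlocmin
        filter_upwards [htendr.eventually h1, hevr] with t ht hnorm
        rw [hnorm] at ht
        simpa [← hrdef] using ht
      have hdr : HasDerivAt (fun t : ℝ => φ (x₀ + t • u₀) - Real.sin (r + t))
          (fderiv ℝ φ x₀ u₀ - Real.cos r) 0 := by
        have h1 := MP.sl2a hφ x₀ u₀ 0
        rw [show x₀ + (0:ℝ) • u₀ = x₀ by simp] at h1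
        have h2 : HasDerivAt (fun t : ℝ => Real.sin (r + t)) (Real.cos r) 0 := by
          have h3 : HasDerivAt (fun t : ℝ => r + t) 1 0 := by
            simpa using (hasDerivAt_id (0:ℝ)).const_add r
          have := (Real.hasDerivAt_sin (r + 0)).comp 0 h3
          simpa [Function.comp_def] using this
        exact h1.sub h2
      have hderiv0 : fderiv ℝ φ x₀ u₀ - Real.cos r = 0 :=
        hminr.hasDerivAt_eq_zero hdr
      have hgradlb : |Real.cos r| ≤ ‖gradient φ x₀‖ := by
        have h1 : (inner ℝ (gradient φ x₀) u₀ : ℝ) = Real.cos r := by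
          rw [hgrad_eq u₀]; linarith
        calc |Real.cos r| = |(inner ℝ (gradient φ x₀) u₀ : ℝ)| := by rw [h1]
          _ ≤ ‖gradient φ x₀‖ * ‖u₀‖ := abs_real_inner_le_norm _ _
          _ = ‖gradient φ x₀‖ := by rw [hu1, mul_one]
      -- Hessian lower bound on the tangent space
      set m : ℝ := Real.cos r / r with hm
      have hqm : ∀ v : EuclideanSpace ℝ (Fin n), (inner ℝ x₀ v : ℝ) = 0 →
          m * (inner ℝ v v : ℝ) ≤ (fun k => v k) ⬝ᵥ (X *ᵥ fun k => v k) := by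
        intro v hvo
        set s : ℝ := ‖v‖ with hs
        have hcontv : Continuous (fun t : ℝ => x₀ + t • v) := by fun_prop
        have htendv : Filter.Tendsto (fun t : ℝ => x₀ + t • v) (𝓝 0) (𝓝 x₀) := by
          have := hcontv.tendsto 0
          simpa using this
        have hnormv : ∀ t : ℝ, ‖x₀ + t • v‖ = Real.sqrt (r^2 + t^2 * s^2) :=
          fun t => MP.tangent_norm x₀ v hvo t
        have hminv : IsLocalMin
            (fun t : ℝ => φ (x₀ + t • v) - Real.sin (Real.sqrt (r^2 + t^2 * s^2))) 0 := by
          show ∀ᶠ t in 𝓝 (0:ℝ), _ ≤ _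
          have h1 : ∀ᶠ x in 𝓝 x₀, φ x₀ - Real.sin ‖x₀‖ ≤ φ x - Real.sin ‖x‖ := hlocmin
          filter_upwards [htendv.eventually h1] with t ht
          rw [hnormv t] at ht
          have h0 : ‖x₀‖ = Real.sqrt (r^2 + (0:ℝ)^2 * s^2) := by
            rw [show r^2 + (0:ℝ)^2*s^2 = r^2 by ring, Real.sqrt_sq r0.le]
          rw [h0] at ht
          simpa using ht
        have hGd := MP.G_hasDeriv r s r0
        have hkey := MP.sl3
          (fun t => (MP.sl2a hφ x₀ v t).sub (hGd.1 t))
          ((MP.sl2b hφ x₀ v).sub hGd.2) hminv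
        rw [MP.sl1 x₀ v] at hkey
        rw [real_inner_self_eq_norm_sq, ← hs]
        have : m * s^2 = Real.cos r * s^2 / r := by rw [hm]; ring
        rw [this]
        linarith
      have hsort := MP.sorted_ge hX m (MP.eig_bound hX x₀ m hqm)
      -- sum over the top p eigenvalues
      set S := Finset.univ.filter (fun i : Fin n => n - p ≤ (i : ℕ)) with hS
      have hcard : S.card ≤ p := by
        have := Finset.card_le_card_of_injOn
          (f := fun i : Fin n => (i : ℕ) - (n - p)) (s := S) (t := Finset.range p)
          (fun i hi => by
            simp only [Finset.coe_range, Set.mem_Iio]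
            have h1 : n - p ≤ (i : ℕ) := (Finset.mem_filter.1 hi).2
            have h2 : (i : ℕ) < n := i.2
            omega)
          (fun i hi j hj hij => by
            have h1 : n - p ≤ (i : ℕ) := (Finset.mem_filter.1 hi).2
            have h2 : n - p ≤ (j : ℕ) := (Finset.mem_filter.1 hj).2
            have h3 : (i : ℕ) - (n - p) = (j : ℕ) - (n - p) := hij
            have : (i : ℕ) = (j : ℕ) := by omega
            exact Fin.ext this)
        simpa using this
      have hterm : ∀ k ∈ S, -(lam * max (-m) 0)
          ≤ Lam * max (sortedEig X k) 0 - lam * max (-(sortedEig X k)) 0 := by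
        intro k hk
        have hk1 : 1 ≤ (k : ℕ) := by
          have h1 : n - p ≤ (k : ℕ) := (Finset.mem_filter.1 hk).2
          omega
        have hs := hsort k hk1
        have h1 : max (-(sortedEig X k)) 0 ≤ max (-m) 0 :=
          max_le_max (by linarith) le_rfl
        have h2 : lam * max (-(sortedEig X k)) 0 ≤ lam * max (-m) 0 :=
          mul_le_mul_of_nonneg_left h1 hlam.le
        have h3 : 0 ≤ Lam * max (sortedEig X k) 0 :=
          mul_nonneg (hlam.trans_le hLam).le (le_max_right _ _)
        linarith
      have hMnn : 0 ≤ lam * max (-m) 0 := mul_nonneg hlam.le (le_max_right _ _)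
      have hsum : -(lam * (p:ℝ) * max (-m) 0) ≤ pucciSupP lam Lam p X := by
        have h1 : ∑ k ∈ S, (-(lam * max (-m) 0))
            ≤ ∑ k ∈ S, (Lam * max (sortedEig X k) 0 - lam * max (-(sortedEig X k)) 0) :=
          Finset.sum_le_sum hterm
        have h2 : ∑ k ∈ S, (-(lam * max (-m) 0)) = (S.card : ℝ) * (-(lam * max (-m) 0)) := by
          rw [Finset.sum_const, nsmul_eq_mul]
        have h3 : -(lam * (p:ℝ) * max (-m) 0) ≤ (S.card : ℝ) * (-(lam * max (-m) 0)) := by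
          have h4 : (S.card : ℝ) ≤ (p : ℝ) := by exact_mod_cast hcard
          nlinarith
        rw [pucciSupP]
        calc -(lam * (p:ℝ) * max (-m) 0) ≤ (S.card : ℝ) * (-(lam * max (-m) 0)) := h3
          _ = ∑ k ∈ S, (-(lam * max (-m) 0)) := h2.symm
          _ ≤ _ := h1
      have hgradfin : lam * (p:ℝ) * max (-m) 0 ≤ b * ‖gradient φ x₀‖ := by
        by_cases hcos : 0 ≤ Real.cos r
        · have hm0 : 0 ≤ m := div_nonneg hcos r0.le
          rw [max_eq_right (by linarith)]
          simpa using hbnorm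
        · push_neg at hcos
          have hmneg : max (-m) 0 = -m := max_eq_left (by
            rw [hm]
            have : Real.cos r / r < 0 := div_neg_of_neg_of_pos hcos r0
            linarith)
          rw [hmneg, hm]
          have habs : |Real.cos r| = -Real.cos r := abs_of_neg hcos
          have hstep1 : lam * (p:ℝ) * -(Real.cos r / r) ≤ b * (-Real.cos r) := by
            rw [hb, hδε]
            rw [show lam * (p:ℝ) * -(Real.cos r / r) = lam * (p:ℝ) * (-Real.cos r) / r by ring]
            rw [show lam * (p:ℝ) / c * (-Real.cos r) = lam * (p:ℝ) * (-Real.cos r) / c by ring]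
            apply div_le_div_of_nonneg_left ?_ hc_pos hr
            · exact mul_nonneg (mul_nonneg hlam.le hppos.le) (by linarith)
          have hstep2 : b * (-Real.cos r) ≤ b * ‖gradient φ x₀‖ := by
            apply mul_le_mul_of_nonneg_left ?_ hb0.le
            rw [← habs]
            exact hgradlb
          linarith
      linarith
  · -- bounded by 1
    intro x _
    rw [hudef x]
    by_cases hx : ‖x‖ ≤ c
    · rw [if_pos hx]; exact Real.cos_le_one _
    · rw [if_neg hx]; exact Real.sin_le_one _
  · -- maximum attained
    refine ⟨EuclideanSpace.single (⟨0, by omega⟩ : Fin n) (Real.pi / 2), ?_, ?_⟩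
    · rw [mem_closedBall_zero_iff, EuclideanSpace.norm_single, Real.norm_eq_abs,
        abs_of_pos (by linarith : (0:ℝ) < Real.pi / 2)]
      linarith
    · rw [hudef, EuclideanSpace.norm_single, Real.norm_eq_abs,
        abs_of_pos (by linarith : (0:ℝ) < Real.pi / 2), if_neg (by rw [hc]; intro h; linarith),
        Real.sin_pi_div_two]
  · -- boundary values
    intro x hx
    rw [mem_sphere_zero_iff_norm] at hx
    rw [hudef x, hx, if_neg (by intro h; linarith), hsinδ]
  · -- cos ε/2 < 1
    have := Real.cos_lt_cos_of_nonneg_of_le_pi (le_refl (0:ℝ))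
      (by linarith : ε / 2 ≤ Real.pi) (by linarith : (0:ℝ) < ε / 2)
    rwa [Real.cos_zero] at this
  · -- lam * p < b * δ
    have hne : δ - ε ≠ 0 := by rw [hδε]; exact hc_pos.ne'
    have h1 : b * (δ - ε) = lam * p := by
      rw [hb, div_mul_cancel₀ _ hne]
    nlinarith [mul_pos hb0 hε0, h1]



end
end
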